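/- Let C be a braided monoidal category and V, W ∈ C objects with left duals. Define Hom(V,W) := W ⊗ V* with the left End(W)-action ▸ = id_W ⊗ ev_W ⊗ id_{V*} and right End(V)-action ◂ = id_W ⊗ ev_V ⊗ id_{V*}. Then (Hom(V,W), ▸, ◂) is a bimodule over the algebras End(W) and End(V), and the two induced half-braidings hbl and hbr on it both equal X ↦ (c_{W,X} ⊗ id_{V*}) ∘ (id_W ⊗ c⁻¹_{X,V*}); in particular the bimodule is hb-compatible. -/

import Mathlib

open CategoryTheory MonoidalCategory

variable {C : Type*} [Category C] [MonoidalCategory C] [BraidedCategory C]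

section InternalHom

variable (V W : C) [HasRightDual V] [HasRightDual W]

/-- The multiplication of the internal endomorphism algebra `End(V) = V ⊗ V*`. -/
noncomputable def endMul : (V ⊗ Vᘁ) ⊗ (V ⊗ Vᘁ) ⟶ V ⊗ Vᘁ :=
  (α_ V (Vᘁ) (V ⊗ Vᘁ)).hom ≫
    (V ◁ ((α_ (Vᘁ) V (Vᘁ)).inv ≫ ((ε_ V (Vᘁ)) ▷ (Vᘁ)) ≫ (λ_ (Vᘁ)).hom))

/-- The canonical half-braiding of `End(V) = V ⊗ V*`:
`t_X = (c_{V,X} ⊗ id_{V*}) ∘ (id_V ⊗ c⁻¹_{X,V*})`. -/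
noncomputable def endHalfBraiding (X : C) : (V ⊗ Vᘁ) ⊗ X ⟶ X ⊗ (V ⊗ Vᘁ) :=
  (α_ V (Vᘁ) X).hom ≫ (V ◁ (β_ X (Vᘁ)).inv) ≫ (α_ V X (Vᘁ)).inv ≫
    ((β_ V X).hom ▷ (Vᘁ)) ≫ (α_ X V (Vᘁ)).hom

/-- The left action of `End(W)` on the internal hom `Hom(V,W) = W ⊗ V*`,
`▸ = id_W ⊗ ev_W ⊗ id_{V*}`. -/
noncomputable def homActLeft : (W ⊗ Wᘁ) ⊗ (W ⊗ Vᘁ) ⟶ W ⊗ Vᘁ :=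
  (α_ W (Wᘁ) (W ⊗ Vᘁ)).hom ≫
    (W ◁ ((α_ (Wᘁ) W (Vᘁ)).inv ≫ ((ε_ W (Wᘁ)) ▷ (Vᘁ)) ≫ (λ_ (Vᘁ)).hom))

/-- The right action of `End(V)` on `Hom(V,W) = W ⊗ V*`, `◂ = id_W ⊗ ev_V ⊗ id_{V*}`. -/
noncomputable def homActRight : (W ⊗ Vᘁ) ⊗ (V ⊗ Vᘁ) ⟶ W ⊗ Vᘁ :=
  (α_ W (Vᘁ) (V ⊗ Vᘁ)).hom ≫
    (W ◁ ((α_ (Vᘁ) V (Vᘁ)).inv ≫ ((ε_ V (Vᘁ)) ▷ (Vᘁ)) ≫ (λ_ (Vᘁ)).hom))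

/-- The half-braiding `hbl` on `Hom(V,W)` induced by the left `End(W)`-action:
`hbl_X = (id_X ⊗ ▸) ∘ (t_X ⊗ id) ∘ (id ⊗ c⁻¹) ∘ (η ⊗ id)`. -/
noncomputable def homHbl (X : C) : (W ⊗ Vᘁ) ⊗ X ⟶ X ⊗ (W ⊗ Vᘁ) :=
  (λ_ ((W ⊗ Vᘁ) ⊗ X)).inv ≫ ((η_ W (Wᘁ)) ▷ ((W ⊗ Vᘁ) ⊗ X)) ≫
    ((W ⊗ Wᘁ) ◁ (β_ X (W ⊗ Vᘁ)).inv) ≫ (α_ (W ⊗ Wᘁ) X (W ⊗ Vᘁ)).inv ≫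
      (endHalfBraiding W X ▷ (W ⊗ Vᘁ)) ≫ (α_ X (W ⊗ Wᘁ) (W ⊗ Vᘁ)).hom ≫
        (X ◁ homActLeft V W)

/-- The half-braiding `hbr` on `Hom(V,W)` induced by the right `End(V)`-action. -/
noncomputable def homHbr (X : C) : (W ⊗ Vᘁ) ⊗ X ⟶ X ⊗ (W ⊗ Vᘁ) :=
  ((W ⊗ Vᘁ) ◁ ((λ_ X).inv ≫ ((η_ V (Vᘁ)) ▷ X) ≫ endHalfBraiding V X)) ≫
    (α_ (W ⊗ Vᘁ) X (V ⊗ Vᘁ)).inv ≫ ((β_ (W ⊗ Vᘁ) X).hom ▷ (V ⊗ Vᘁ)) ≫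
      (α_ X (W ⊗ Vᘁ) (V ⊗ Vᘁ)).hom ≫ (X ◁ homActRight V W)

end InternalHom


section AuxProofs

open BraidedCategory

variable (V W : C) [HasRightDual V] [HasRightDual W]

set_option maxHeartbeats 1000000 in
private lemma homActLeft_one : ((η_ W (Wᘁ)) ▷ (W ⊗ Vᘁ)) ≫ homActLeft V W = (λ_ (W ⊗ Vᘁ)).hom := by
  calc ((η_ W (Wᘁ)) ▷ (W ⊗ Vᘁ)) ≫ homActLeft V W
      = 𝟙 _ ⊗≫ ((η_ W (Wᘁ) ▷ W ⊗≫ W ◁ ε_ W (Wᘁ)) ▷ (Vᘁ)) ⊗≫ 𝟙 _ := by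
        simp [homActLeft]; monoidal
    _ = (λ_ (W ⊗ Vᘁ)).hom := by rw [ExactPairing.evaluation_coevaluation'']; monoidal

set_option maxHeartbeats 1000000 in
private lemma homActLeft_assoc : (endMul W ▷ (W ⊗ Vᘁ)) ≫ homActLeft V W =
      (α_ (W ⊗ Wᘁ) (W ⊗ Wᘁ) (W ⊗ Vᘁ)).hom ≫ ((W ⊗ Wᘁ) ◁ homActLeft V W) ≫
        homActLeft V W := by
  calc (endMul W ▷ (W ⊗ Vᘁ)) ≫ homActLeft V W
      = 𝟙 _ ⊗≫ W ◁ ((ε_ W (Wᘁ) ⊗ₘ ε_ W (Wᘁ)) ▷ (Vᘁ)) ⊗≫ 𝟙 _ := by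
        rw [MonoidalCategory.tensorHom_def]; simp only [endMul, homActLeft]; monoidal
    _ = _ := by
        rw [tensorHom_def']; simp only [endMul, homActLeft]; monoidal

set_option maxHeartbeats 1000000 in
private lemma homActRight_one : ((W ⊗ Vᘁ) ◁ (η_ V (Vᘁ))) ≫ homActRight V W = (ρ_ (W ⊗ Vᘁ)).hom := by
  calc ((W ⊗ Vᘁ) ◁ (η_ V (Vᘁ))) ≫ homActRight V W
      = 𝟙 _ ⊗≫ W ◁ ((Vᘁ) ◁ η_ V (Vᘁ) ⊗≫ ε_ V (Vᘁ) ▷ (Vᘁ)) ⊗≫ 𝟙 _ := by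
        simp only [homActRight]; monoidal
    _ = (ρ_ (W ⊗ Vᘁ)).hom := by rw [ExactPairing.coevaluation_evaluation'']; monoidal

set_option maxHeartbeats 1000000 in
private lemma homActRight_assoc : ((W ⊗ Vᘁ) ◁ endMul V) ≫ homActRight V W =
      (α_ (W ⊗ Vᘁ) (V ⊗ Vᘁ) (V ⊗ Vᘁ)).inv ≫ (homActRight V W ▷ (V ⊗ Vᘁ)) ≫
        homActRight V W := by
  calc ((W ⊗ Vᘁ) ◁ endMul V) ≫ homActRight V W
      = 𝟙 _ ⊗≫ W ◁ ((ε_ V (Vᘁ) ⊗ₘ ε_ V (Vᘁ)) ▷ (Vᘁ)) ⊗≫ 𝟙 _ := by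
        rw [tensorHom_def']; simp only [endMul, homActRight]; monoidal
    _ = _ := by
        rw [MonoidalCategory.tensorHom_def]; simp only [homActRight]; monoidal

set_option maxHeartbeats 1000000 in
private lemma homAct_comm : (homActLeft V W ▷ (V ⊗ Vᘁ)) ≫ homActRight V W =
      (α_ (W ⊗ Wᘁ) (W ⊗ Vᘁ) (V ⊗ Vᘁ)).hom ≫ ((W ⊗ Wᘁ) ◁ homActRight V W) ≫
        homActLeft V W := by
  calc (homActLeft V W ▷ (V ⊗ Vᘁ)) ≫ homActRight V W
      = 𝟙 _ ⊗≫ W ◁ ((ε_ W (Wᘁ) ⊗ₘ ε_ V (Vᘁ)) ▷ (Vᘁ)) ⊗≫ 𝟙 _ := by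
        rw [MonoidalCategory.tensorHom_def]; simp only [homActLeft, homActRight]; monoidal
    _ = _ := by
        rw [tensorHom_def']; simp only [homActLeft, homActRight]; monoidal

set_option maxHeartbeats 1000000 in
private lemma homHbl_eq (X : C) : homHbl V W X =
      (α_ W (Vᘁ) X).hom ≫ (W ◁ (β_ X (Vᘁ)).inv) ≫ (α_ W X (Vᘁ)).inv ≫
        ((β_ W X).hom ▷ (Vᘁ)) ≫ (α_ X W (Vᘁ)).hom := by
  calc homHbl V W X
      = 𝟙 _ ⊗≫ η_ W (Wᘁ) ▷ ((W ⊗ Vᘁ) ⊗ X)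
        ⊗≫ (W ⊗ Wᘁ) ◁ W ◁ (β_ X (Vᘁ)).inv
        ⊗≫ (W ⊗ Wᘁ) ◁ ((β_ X W).inv ▷ (Vᘁ))
        ⊗≫ W ◁ ((β_ X (Wᘁ)).inv ▷ (W ⊗ Vᘁ))
        ⊗≫ ((β_ W X).hom ▷ ((Wᘁ ⊗ W) ⊗ Vᘁ) ≫ (X ⊗ W) ◁ (ε_ W (Wᘁ) ▷ (Vᘁ)))
        ⊗≫ 𝟙 _ := by
        simp only [homHbl, homActLeft, endHalfBraiding, braiding_tensor_right_inv]; monoidal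
    _ = 𝟙 _ ⊗≫ η_ W (Wᘁ) ▷ ((W ⊗ Vᘁ) ⊗ X)
        ⊗≫ (W ⊗ Wᘁ) ◁ W ◁ (β_ X (Vᘁ)).inv
        ⊗≫ W ◁ (((β_ X (Wᘁ ⊗ W)).inv ≫ X ◁ ε_ W (Wᘁ)) ▷ (Vᘁ))
        ⊗≫ (β_ W X).hom ▷ (Vᘁ) ⊗≫ 𝟙 _ := by
        rw [← whisker_exchange ((β_ W X).hom) (ε_ W (Wᘁ) ▷ (Vᘁ)), braiding_tensor_right_inv]
        monoidal
    _ = 𝟙 _ ⊗≫ η_ W (Wᘁ) ▷ ((W ⊗ Vᘁ) ⊗ X)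
        ⊗≫ ((W ⊗ (Wᘁ ⊗ W)) ◁ (β_ X (Vᘁ)).inv ≫ (W ◁ ε_ W (Wᘁ)) ▷ (X ⊗ Vᘁ))
        ⊗≫ (β_ W X).hom ▷ (Vᘁ) ⊗≫ 𝟙 _ := by
        rw [← braiding_inv_naturality_left (ε_ W (Wᘁ)) X, braiding_inv_tensorUnit_right]
        monoidal
    _ = 𝟙 _ ⊗≫ ((η_ W (Wᘁ) ▷ W ⊗≫ W ◁ ε_ W (Wᘁ)) ▷ ((Vᘁ) ⊗ X))
        ⊗≫ W ◁ (β_ X (Vᘁ)).inv ⊗≫ (β_ W X).hom ▷ (Vᘁ) ⊗≫ 𝟙 _ := by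
        rw [whisker_exchange]
        monoidal
    _ = (α_ W (Vᘁ) X).hom ≫ (W ◁ (β_ X (Vᘁ)).inv) ≫ (α_ W X (Vᘁ)).inv ≫
        ((β_ W X).hom ▷ (Vᘁ)) ≫ (α_ X W (Vᘁ)).hom := by
        rw [ExactPairing.evaluation_coevaluation'']
        monoidal

set_option maxHeartbeats 1000000 in
private lemma homHbr_eq (X : C) : homHbr V W X =
      (α_ W (Vᘁ) X).hom ≫ (W ◁ (β_ X (Vᘁ)).inv) ≫ (α_ W X (Vᘁ)).inv ≫
        ((β_ W X).hom ▷ (Vᘁ)) ≫ (α_ X W (Vᘁ)).hom := by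
  calc homHbr V W X
      = 𝟙 _ ⊗≫ W ◁ (Vᘁ) ◁ (η_ V (Vᘁ) ▷ X)
        ⊗≫ W ◁ (Vᘁ) ◁ V ◁ (β_ X (Vᘁ)).inv
        ⊗≫ W ◁ (Vᘁ) ◁ ((β_ V X).hom ▷ (Vᘁ))
        ⊗≫ W ◁ ((β_ (Vᘁ) X).hom ▷ (V ⊗ (Vᘁ)))
        ⊗≫ ((β_ W X).hom ▷ (((Vᘁ) ⊗ V) ⊗ (Vᘁ)) ≫ (X ⊗ W) ◁ (ε_ V (Vᘁ) ▷ (Vᘁ)))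
        ⊗≫ 𝟙 _ := by
        simp only [homHbr, homActRight, endHalfBraiding, braiding_tensor_left_hom]; monoidal
    _ = 𝟙 _ ⊗≫ W ◁ (Vᘁ) ◁ (η_ V (Vᘁ) ▷ X)
        ⊗≫ W ◁ (Vᘁ) ◁ V ◁ (β_ X (Vᘁ)).inv
        ⊗≫ W ◁ (((β_ ((Vᘁ) ⊗ V) X).hom ≫ X ◁ ε_ V (Vᘁ)) ▷ (Vᘁ))
        ⊗≫ (β_ W X).hom ▷ (Vᘁ) ⊗≫ 𝟙 _ := by
        rw [← whisker_exchange ((β_ W X).hom) (ε_ V (Vᘁ) ▷ (Vᘁ)), braiding_tensor_left_hom]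
        monoidal
    _ = 𝟙 _ ⊗≫ W ◁ (Vᘁ) ◁ (η_ V (Vᘁ) ▷ X)
        ⊗≫ W ◁ (((Vᘁ) ⊗ V) ◁ (β_ X (Vᘁ)).inv ≫ ε_ V (Vᘁ) ▷ (X ⊗ (Vᘁ)))
        ⊗≫ (β_ W X).hom ▷ (Vᘁ) ⊗≫ 𝟙 _ := by
        rw [← braiding_naturality_left (ε_ V (Vᘁ)) X, braiding_tensorUnit_left]
        monoidal
    _ = 𝟙 _ ⊗≫ W ◁ (((Vᘁ) ◁ η_ V (Vᘁ) ⊗≫ ε_ V (Vᘁ) ▷ (Vᘁ)) ▷ X)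
        ⊗≫ W ◁ (β_ X (Vᘁ)).inv ⊗≫ (β_ W X).hom ▷ (Vᘁ) ⊗≫ 𝟙 _ := by
        rw [whisker_exchange]
        monoidal
    _ = (α_ W (Vᘁ) X).hom ≫ (W ◁ (β_ X (Vᘁ)).inv) ≫ (α_ W X (Vᘁ)).inv ≫
        ((β_ W X).hom ▷ (Vᘁ)) ≫ (α_ X W (Vᘁ)).hom := by
        rw [ExactPairing.coevaluation_evaluation'']
        monoidal

end AuxProofs

/-- Let `V, W` be objects with duals in a braided monoidal category `C`.
Then `Hom(V,W) = W ⊗ V*`, with the left `End(W)`-action `id_W ⊗ ev_W ⊗ id_{V*}` and the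
right `End(V)`-action `id_W ⊗ ev_V ⊗ id_{V*}`, is a bimodule over the algebras `End(W)`
and `End(V)`, and the two induced half-braidings `hbl`, `hbr` on it both equal
`X ↦ (c_{W,X} ⊗ id_{V*}) ∘ (id_W ⊗ c⁻¹_{X,V*})`; in particular the bimodule is
hb-compatible. -/
theorem internalHom_bimodule_hbCompatible (V W : C) [HasRightDual V] [HasRightDual W] :
    -- `Hom(V,W)` is a left `End(W)`-module:
    (((η_ W (Wᘁ)) ▷ (W ⊗ Vᘁ)) ≫ homActLeft V W = (λ_ (W ⊗ Vᘁ)).hom) ∧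
    ((endMul W ▷ (W ⊗ Vᘁ)) ≫ homActLeft V W =
      (α_ (W ⊗ Wᘁ) (W ⊗ Wᘁ) (W ⊗ Vᘁ)).hom ≫ ((W ⊗ Wᘁ) ◁ homActLeft V W) ≫
        homActLeft V W) ∧
    -- `Hom(V,W)` is a right `End(V)`-module:
    (((W ⊗ Vᘁ) ◁ (η_ V (Vᘁ))) ≫ homActRight V W = (ρ_ (W ⊗ Vᘁ)).hom) ∧
    (((W ⊗ Vᘁ) ◁ endMul V) ≫ homActRight V W =
      (α_ (W ⊗ Vᘁ) (V ⊗ Vᘁ) (V ⊗ Vᘁ)).inv ≫ (homActRight V W ▷ (V ⊗ Vᘁ)) ≫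
        homActRight V W) ∧
    -- the two actions commute:
    ((homActLeft V W ▷ (V ⊗ Vᘁ)) ≫ homActRight V W =
      (α_ (W ⊗ Wᘁ) (W ⊗ Vᘁ) (V ⊗ Vᘁ)).hom ≫ ((W ⊗ Wᘁ) ◁ homActRight V W) ≫
        homActLeft V W) ∧
    -- both induced half-braidings are `(c_{W,X} ⊗ id) ∘ (id ⊗ c⁻¹_{X,V*})`:
    (∀ X : C, homHbl V W X =
      (α_ W (Vᘁ) X).hom ≫ (W ◁ (β_ X (Vᘁ)).inv) ≫ (α_ W X (Vᘁ)).inv ≫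
        ((β_ W X).hom ▷ (Vᘁ)) ≫ (α_ X W (Vᘁ)).hom) ∧
    (∀ X : C, homHbr V W X =
      (α_ W (Vᘁ) X).hom ≫ (W ◁ (β_ X (Vᘁ)).inv) ≫ (α_ W X (Vᘁ)).inv ≫
        ((β_ W X).hom ▷ (Vᘁ)) ≫ (α_ X W (Vᘁ)).hom) :=
  ⟨homActLeft_one V W, homActLeft_assoc V W, homActRight_one V W, homActRight_assoc V W,
   homAct_comm V W, homHbl_eq V W, homHbr_eq V W⟩
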